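/- Let κ be a regular uncountable cardinal and let B be a Boolean algebra satisfying the κ-chain condition: every set of pairwise disjoint nonzero elements of B has cardinality less than κ. Then for every regular cardinal λ ≥ κ, there is no ultrafilter U on B with (U,≥) ≡_T (λ,≤), where λ carries its ordinal order. -/

import Mathlib

open Cardinal

/-- A subset `X` of a preorder is cofinal if every element has an upper bound in `X`. -/
def TCofinal {P : Type*} [Preorder P] (X : Set P) : Prop :=
  ∀ p : P, ∃ x ∈ X, p ≤ x

/-- A map is cofinal if it sends cofinal sets to cofinal sets. -/
def TCofinalMap {P Q : Type*} [Preorder P] [Preorder Q] (f : P → Q) : Prop :=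
  ∀ X : Set P, TCofinal X → TCofinal (f '' X)

/-- `P ≤_T Q`: there is a cofinal map from `Q` to `P`. -/
def TukeyLE (P Q : Type*) [Preorder P] [Preorder Q] : Prop :=
  ∃ f : Q → P, TCofinalMap f

/-- Tukey equivalence. -/
def TukeyEquiv (P Q : Type*) [Preorder P] [Preorder Q] : Prop :=
  TukeyLE P Q ∧ TukeyLE Q P

/-- An ultrafilter on a Boolean algebra `B`. -/
structure BAUltrafilter (B : Type*) [BooleanAlgebra B] where
  carrier : Set B
  bot_not_mem : ⊥ ∉ carrier
  inf_mem : ∀ a ∈ carrier, ∀ b ∈ carrier, a ⊓ b ∈ carrier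
  up_closed : ∀ a ∈ carrier, ∀ b : B, a ≤ b → b ∈ carrier
  mem_or_compl_mem : ∀ b : B, b ∈ carrier ∨ bᶜ ∈ carrier

universe u

/-- Any `< lam`-indexed family in `lam.ord.ToType` is bounded, for regular `lam`. -/
lemma aux_bounded {lam : Cardinal.{u}} (hlamreg : lam.IsRegular)
    {ι : Type u} (hι : #ι < lam) (t : ι → lam.ord.ToType) :
    ∃ b : lam.ord.ToType, ∀ i, t i ≤ b := by
  set e := Ordinal.ToType.mk (o := lam.ord) with he
  set Φ : ι → Ordinal := fun i => (e.symm (t i)).1 with hΦ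
  have h1 : ∀ i, Φ i < lam.ord := fun i => (e.symm (t i)).2
  have h2 : (⨆ i, Φ i) < lam.ord := Cardinal.iSup_lt_ord_of_isRegular hlamreg hι h1
  refine ⟨e ⟨_, h2⟩, fun i => ?_⟩
  have h3 : e.symm (t i) ≤ e.symm (e ⟨_, h2⟩) := by
    rw [e.symm_apply_apply]
    exact Subtype.coe_le_coe.1 (Ordinal.le_iSup Φ i)
  exact e.symm.le_iff_le.1 h3

/-- Construction of a decreasing "diagonal" chain below a cofinal family. -/
lemma aux_chain {B : Type u} [BooleanAlgebra B] {lam : Cardinal.{u}} (hlamreg : lam.IsRegular)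
    (S : Set B) (hinf : ∀ a ∈ S, ∀ b ∈ S, a ⊓ b ∈ S)
    (F : lam.ord.ToType → B) (hFS : ∀ α, F α ∈ S)
    (htail : ∀ u ∈ S, ∃ α₀ : lam.ord.ToType, ∀ α, α₀ ≤ α → F α ≤ u) :
    ∃ a : lam.ord.ToType → B, (∀ α, a α ∈ S) ∧ (∀ α, a α ≤ F α) ∧
      (∀ γ α, γ ≤ α → a α ≤ a γ) := by
  classical
  have key : ∀ (α : lam.ord.ToType) (prev : ∀ γ, γ < α → {u : B // u ∈ S}),
      ∃ u : B, u ∈ S ∧ u ≤ F α ∧ ∀ γ (h : γ < α), u ≤ (prev γ h).1 := by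
    intro α prev
    have ht : ∀ γ : {γ // γ < α}, ∃ α₀, ∀ β, α₀ ≤ β → F β ≤ (prev γ.1 γ.2).1 :=
      fun γ => htail _ (prev γ.1 γ.2).2
    choose t htt using ht
    have hcard : #{γ : lam.ord.ToType // γ < α} < lam := Cardinal.mk_Iio_ord_toType α
    obtain ⟨b, hb⟩ := aux_bounded hlamreg hcard t
    refine ⟨F b ⊓ F α, hinf _ (hFS b) _ (hFS α), inf_le_right, ?_⟩
    intro γ h
    exact le_trans inf_le_left (htt ⟨γ, h⟩ b (hb _))
  let step : ∀ α : lam.ord.ToType, (∀ γ, γ < α → {u : B // u ∈ S}) → {u : B // u ∈ S} :=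
    fun α prev => ⟨Classical.choose (key α prev), (Classical.choose_spec (key α prev)).1⟩
  have wf : WellFounded ((· < ·) : lam.ord.ToType → lam.ord.ToType → Prop) := wellFounded_lt
  let a' : lam.ord.ToType → {u : B // u ∈ S} := wf.fix step
  have hfix : ∀ α, a' α = step α (fun γ _ => a' γ) := fun α => wf.fix_eq step α
  refine ⟨fun α => (a' α).1, fun α => (a' α).2, ?_, ?_⟩
  · intro α
    show (a' α).1 ≤ F α
    rw [hfix α]
    exact (Classical.choose_spec (key α _)).2.1
  · intro γ α h
    rcases eq_or_lt_of_le h with rfl | h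
    · exact le_rfl
    · show (a' α).1 ≤ (a' γ).1
      conv_lhs => rw [hfix α]
      exact (Classical.choose_spec (key α _)).2.2 γ h

/-- If `κ` is regular uncountable and `B` satisfies the `κ`-chain condition
(every pairwise-disjoint set of nonzero elements has size `< κ`), then for every regular
`λ ≥ κ` there is no ultrafilter `U` on `B` with `(U,≥) ≡_T (λ,≤)`. -/
theorem stmt5 {B : Type*} [BooleanAlgebra B] (κ : Cardinal)
    (hreg : κ.IsRegular) (hunc : ℵ₀ < κ)
    (hcc : ∀ S : Set B, (∀ a ∈ S, a ≠ ⊥) → (S.Pairwise fun a b => a ⊓ b = ⊥) → #↥S < κ)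
    (lam : Cardinal) (hlamreg : lam.IsRegular) (hlam : κ ≤ lam) :
    ¬∃ U : BAUltrafilter B, TukeyEquiv ((↥U.carrier)ᵒᵈ) lam.ord.ToType := by
  classical
  rintro ⟨U, ⟨⟨f, hf⟩, ⟨g, hg⟩⟩⟩
  have hlaminf : ℵ₀ ≤ lam := hlamreg.aleph0_le
  have hnomax : ∀ x : lam.ord.ToType, ∃ y, x < y := by
    have := Cardinal.noMaxOrder hlaminf
    exact fun x => exists_gt x
  let F : lam.ord.ToType → B := fun α => (OrderDual.ofDual (f α)).1
  have hFS : ∀ α, F α ∈ U.carrier := fun α => (OrderDual.ofDual (f α)).2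
  -- tail property of the cofinal map f
  have htail : ∀ u ∈ U.carrier, ∃ α₀ : lam.ord.ToType, ∀ α, α₀ ≤ α → F α ≤ u := by
    intro u hu
    by_contra hcon
    push_neg at hcon
    have hX : TCofinal {α : lam.ord.ToType | ¬ F α ≤ u} := by
      intro p
      obtain ⟨α, h1, h2⟩ := hcon p
      exact ⟨α, h2, h1⟩
    obtain ⟨x, ⟨α, hαX, rfl⟩, hle⟩ := hf _ hX (OrderDual.toDual ⟨u, hu⟩)
    exact hαX (show F α ≤ u from hle)
  by_cases hmin : ∃ u ∈ U.carrier, ∀ w ∈ U.carrier, u ≤ w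
  · -- U has a minimum: then lam.ord.ToType would have a maximum
    obtain ⟨u₀, hu₀, hm⟩ := hmin
    have hX : TCofinal ({OrderDual.toDual (⟨u₀, hu₀⟩ : ↥U.carrier)} :
        Set ((↥U.carrier)ᵒᵈ)) := by
      intro p
      exact ⟨_, rfl, hm _ (OrderDual.ofDual p).2⟩
    obtain ⟨y, hy⟩ := hnomax (g (OrderDual.toDual ⟨u₀, hu₀⟩))
    obtain ⟨x, ⟨e, he, rfl⟩, hle⟩ := hg _ hX y
    rw [Set.mem_singleton_iff] at he
    subst he
    exact absurd hle (not_le.2 hy)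
  · push_neg at hmin
    obtain ⟨a, haS, haF, hmono⟩ := aux_chain hlamreg U.carrier U.inf_mem F hFS htail
    -- every value of the chain drops somewhere
    have hdrop : ∀ α, ∃ β, a β < a α := by
      intro α
      obtain ⟨w, hw, hnle⟩ := hmin (a α) (haS α)
      obtain ⟨α₀, hα₀⟩ := htail (w ⊓ a α) (U.inf_mem w hw _ (haS α))
      refine ⟨max α₀ α, ?_⟩
      have h1 : a (max α₀ α) ≤ w ⊓ a α := le_trans (haF _) (hα₀ _ (le_max_left _ _))
      refine lt_of_le_of_ne (le_trans h1 inf_le_right) ?_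
      intro heq
      exact hnle (by rw [← heq]; exact le_trans h1 inf_le_left)
    have wf : WellFounded ((· < ·) : lam.ord.ToType → lam.ord.ToType → Prop) := wellFounded_lt
    let m : lam.ord.ToType → lam.ord.ToType := fun α => wf.min {β | a β < a α} ⟨(hdrop α).choose, (hdrop α).choose_spec⟩
    have hm1 : ∀ α, a (m α) < a α := fun α =>
      wf.min_mem {β | a β < a α} ⟨(hdrop α).choose, (hdrop α).choose_spec⟩
    have hm2 : ∀ α β, a β < a α → m α ≤ β := fun α β h =>
      not_lt.1 (wf.not_lt_min _ h)
    have hmval : ∀ α α', a α = a α' → m α = m α' := by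
      intro α α' h
      exact le_antisymm (hm2 _ _ (by rw [h]; exact hm1 α')) (hm2 _ _ (by rw [← h]; exact hm1 α))
    let c : lam.ord.ToType → B := fun α => a α \ a (m α)
    have hcne : ∀ α, c α ≠ ⊥ := by
      intro α h
      exact (hm1 α).not_ge (sdiff_eq_bot_iff.1 h)
    have hdisj : ∀ α α', a α' < a α → c α ⊓ c α' = ⊥ := by
      intro α α' h
      have h1 : m α ≤ α' := hm2 α α' h
      have h2 : a α' ≤ a (m α) := hmono _ _ h1
      have h3 : c α ⊓ c α' ≤ (a (m α))ᶜ ⊓ a (m α) := by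
        refine inf_le_inf ?_ (le_trans sdiff_le h2)
        show a α \ a (m α) ≤ (a (m α))ᶜ
        rw [sdiff_eq]
        exact inf_le_right
      refine le_bot_iff.1 (le_trans h3 ?_)
      rw [inf_comm, inf_compl_eq_bot]
    have hcval : ∀ α α', c α = c α' → a α = a α' := by
      intro α α' h
      by_contra hne
      have hlt : a α' < a α ∨ a α < a α' := by
        rcases le_total α α' with hle | hle
        · exact Or.inl (lt_of_le_of_ne (hmono _ _ hle) fun hh => hne hh.symm)
        · exact Or.inr (lt_of_le_of_ne (hmono _ _ hle) hne)
      rcases hlt with hlt | hlt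
      · have hd := hdisj α α' hlt
        rw [h, inf_idem] at hd
        exact hcne α' hd
      · have hd := hdisj α' α hlt
        rw [h, inf_idem] at hd
        exact hcne α' hd
    -- the pairwise disjoint family
    have hS1 : ∀ x ∈ Set.range c, x ≠ ⊥ := by
      rintro x ⟨α, rfl⟩
      exact hcne α
    have hS2 : (Set.range c).Pairwise fun x y => x ⊓ y = ⊥ := by
      rintro x ⟨α, rfl⟩ y ⟨α', rfl⟩ hxy
      have hne : a α ≠ a α' := fun h => hxy (by
        show a α \ a (m α) = a α' \ a (m α')
        rw [h, hmval α α' h])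
      rcases le_total α α' with hle | hle
      · exact hdisj α α' (lt_of_le_of_ne (hmono _ _ hle) fun hh => hne hh.symm)
      · rw [inf_comm]
        exact hdisj α' α (lt_of_le_of_ne (hmono _ _ hle) hne)
    have hcard : #↥(Set.range c) < κ := hcc _ hS1 hS2
    -- injection from values of the chain into the disjoint family
    let idx : ↥(Set.range a) → lam.ord.ToType := fun v => v.2.choose
    have hidx : ∀ v, a (idx v) = v.1 := fun v => v.2.choose_spec
    let j : ↥(Set.range a) → ↥(Set.range c) := fun v => ⟨c (idx v), Set.mem_range_self _⟩
    have hj : Function.Injective j := by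
      intro v w h
      have h1 : c (idx v) = c (idx w) := congrArg Subtype.val h
      have h2 : a (idx v) = a (idx w) := hcval _ _ h1
      rw [hidx v, hidx w] at h2
      exact Subtype.ext h2
    have hcard2 : #↥(Set.range a) < lam :=
      lt_of_le_of_lt (Cardinal.mk_le_of_injective hj) (lt_of_lt_of_le hcard hlam)
    -- every fiber of the chain is bounded (else U would have a minimum)
    have hfib : ∀ α : lam.ord.ToType, ∃ δ, ∀ β, a β = a α → β < δ := by
      intro α
      by_contra hcon
      push_neg at hcon
      have hminu : ∀ w ∈ U.carrier, a α ≤ w := by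
        intro w hw
        obtain ⟨α₀, hα₀⟩ := htail w hw
        obtain ⟨β, hβ1, hβ2⟩ := hcon α₀
        calc a α = a β := hβ1.symm
          _ ≤ F β := haF β
          _ ≤ w := hα₀ β hβ2
      obtain ⟨w, hw, hnle⟩ := hmin (a α) (haS α)
      exact hnle (hminu w hw)
    let δ : ↥(Set.range a) → lam.ord.ToType := fun v => (hfib (idx v)).choose
    have hδ : ∀ β : lam.ord.ToType, β < δ ⟨a β, Set.mem_range_self β⟩ := by
      intro β
      refine (hfib (idx ⟨a β, Set.mem_range_self β⟩)).choose_spec β ?_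
      exact (hidx ⟨a β, Set.mem_range_self β⟩).symm
    obtain ⟨b, hb⟩ := aux_bounded hlamreg hcard2 δ
    obtain ⟨y, hy⟩ := hnomax b
    have h5 : y < b := lt_of_lt_of_le (hδ y) (hb _)
    exact absurd (h5.trans hy) (lt_irrefl y)
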